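/- Let f = a_0 + a_1 x + ... + a_n x^n ∈ ℤ[x] with a_0 ≥ a_1 ≥ ... ≥ a_n ≥ 1, and suppose f has no cyclotomic factor (equivalently, no zero of f is a root of unity). Then every complex zero θ of f satisfies |θ| > 1. -/

import Mathlib

open Polynomial

/-- Remark (2), strengthened: decreasing positive integer coefficients and no
root of unity among the zeros force all complex zeros outside the closed unit disk. -/
theorem roots_outside_closed_unit_disk (f : Polynomial ℤ) (n : ℕ)
    (hn : f.natDegree = n)
    (hmono : ∀ i, i < n → f.coeff (i + 1) ≤ f.coeff i)
    (hlead : 1 ≤ f.coeff n)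
    (hnocyc : ∀ θ : ℂ, Polynomial.aeval θ f = 0 → ∀ k : ℕ, 0 < k → θ ^ k ≠ 1) :
    ∀ θ : ℂ, Polynomial.aeval θ f = 0 → 1 < ‖θ‖ := by
  intro θ hθ
  by_contra hle
  push_neg at hle
  set a : ℕ → ℤ := f.coeff with ha
  have ha1 : a (n + 1) = 0 := f.coeff_eq_zero_of_natDegree_lt (by omega)
  have habs : ∀ i : ℕ, ‖θ ^ i‖ ≤ 1 := fun i => by
    rw [norm_pow]; exact pow_le_one₀ (norm_nonneg θ) hle
  -- f(θ) = 0 as an explicit sum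
  have hS : ∑ i ∈ Finset.range (n + 1), (a i : ℂ) * θ ^ i = 0 := by
    have := Polynomial.aeval_eq_sum_range (R := ℤ) (S := ℂ) (p := f) θ
    rw [hθ, hn] at this
    rw [← this.symm]
    exact Finset.sum_congr rfl fun i _ => (zsmul_eq_mul _ _).symm
  -- key identity: sum of differences times powers equals a 0
  have hkey : ∑ i ∈ Finset.range (n + 1), ((a i - a (i + 1) : ℤ) : ℂ) * θ ^ (i + 1)
      = (a 0 : ℂ) := by
    have h1 : ∑ i ∈ Finset.range (n + 1), (a i : ℂ) * θ ^ (i + 1) = 0 := by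
      have : ∑ i ∈ Finset.range (n + 1), (a i : ℂ) * θ ^ (i + 1)
          = θ * ∑ i ∈ Finset.range (n + 1), (a i : ℂ) * θ ^ i := by
        rw [Finset.mul_sum]
        exact Finset.sum_congr rfl fun i _ => by ring
      rw [this, hS, mul_zero]
    have h2 : ∑ i ∈ Finset.range (n + 1), (a (i + 1) : ℂ) * θ ^ (i + 1)
        = -(a 0 : ℂ) := by
      have h3 := Finset.sum_range_succ' (fun i => (a i : ℂ) * θ ^ i) (n + 1)
      rw [Finset.sum_range_succ (fun i => (a i : ℂ) * θ ^ i) (n + 1)] at h3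
      rw [hS, ha1] at h3
      push_cast at h3
      simp at h3
      linear_combination -h3
    calc ∑ i ∈ Finset.range (n + 1), ((a i - a (i + 1) : ℤ) : ℂ) * θ ^ (i + 1)
        = ∑ i ∈ Finset.range (n + 1), ((a i : ℂ) * θ ^ (i + 1)
            - (a (i + 1) : ℂ) * θ ^ (i + 1)) := by
          refine Finset.sum_congr rfl fun i _ => ?_; push_cast; ring
      _ = (∑ i ∈ Finset.range (n + 1), (a i : ℂ) * θ ^ (i + 1))
            - ∑ i ∈ Finset.range (n + 1), (a (i + 1) : ℂ) * θ ^ (i + 1) :=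
          Finset.sum_sub_distrib _ _
      _ = (a 0 : ℂ) := by rw [h1, h2]; ring
  -- take real parts
  have hre : ∑ i ∈ Finset.range (n + 1), ((a i - a (i + 1) : ℤ) : ℝ) * (θ ^ (i + 1)).re
      = (a 0 : ℝ) := by
    have := congrArg Complex.re hkey
    rw [Complex.re_sum] at this
    simpa [Complex.mul_re] using this
  have hdsum : ∑ i ∈ Finset.range (n + 1), ((a i - a (i + 1) : ℤ) : ℝ) = (a 0 : ℝ) := by
    have := Finset.sum_range_sub' a (n + 1)
    rw [ha1, sub_zero] at this
    push_cast [← this]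
    rfl
  have hd : ∀ i, i < n + 1 → (0 : ℤ) ≤ a i - a (i + 1) := by
    intro i hi
    rcases lt_or_eq_of_le (Nat.lt_succ_iff.mp hi) with h | h
    · exact sub_nonneg.mpr (hmono i h)
    · subst h; rw [ha1]; omega
  have hzero : ∑ i ∈ Finset.range (n + 1),
      ((a i - a (i + 1) : ℤ) : ℝ) * (1 - (θ ^ (i + 1)).re) = 0 := by
    have : ∑ i ∈ Finset.range (n + 1),
        ((a i - a (i + 1) : ℤ) : ℝ) * (1 - (θ ^ (i + 1)).re)
        = (∑ i ∈ Finset.range (n + 1), ((a i - a (i + 1) : ℤ) : ℝ))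
          - ∑ i ∈ Finset.range (n + 1), ((a i - a (i + 1) : ℤ) : ℝ) * (θ ^ (i + 1)).re := by
      rw [← Finset.sum_sub_distrib]
      exact Finset.sum_congr rfl fun i _ => by ring
    rw [this, hdsum, hre, sub_self]
  have hnneg : ∀ i ∈ Finset.range (n + 1),
      (0 : ℝ) ≤ ((a i - a (i + 1) : ℤ) : ℝ) * (1 - (θ ^ (i + 1)).re) := by
    intro i hi
    apply mul_nonneg
    · exact_mod_cast hd i (Finset.mem_range.mp hi)
    · have := (Complex.re_le_norm (θ ^ (i + 1))).trans (habs (i + 1))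
      linarith
  have hterm := (Finset.sum_eq_zero_iff_of_nonneg hnneg).mp hzero n
      (Finset.mem_range.mpr (Nat.lt_succ_self n))
  have han : (1 : ℤ) ≤ a n := hlead
  have hrepos : (θ ^ (n + 1)).re = 1 := by
    rw [ha1, sub_zero] at hterm
    have hpos : (0 : ℝ) < ((a n : ℤ) : ℝ) := by exact_mod_cast (by omega : (0:ℤ) < a n)
    rcases mul_eq_zero.mp hterm with h | h
    · exact absurd h (ne_of_gt hpos)
    · linarith
  have habs1 : ‖θ ^ (n + 1)‖ = 1 := by
    have h1 : (1 : ℝ) ≤ ‖θ ^ (n + 1)‖ := by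
      have := Complex.re_le_norm (θ ^ (n + 1)); rw [hrepos] at this; exact this
    linarith [habs (n + 1)]
  have him : (θ ^ (n + 1)).im = 0 := by
    have := Complex.sq_norm (θ ^ (n + 1))
    rw [habs1, Complex.normSq_apply, hrepos] at this
    nlinarith [sq_nonneg (θ ^ (n + 1)).im]
  have : θ ^ (n + 1) = 1 := Complex.ext (by simpa using hrepos) (by simpa using him)
  exact hnocyc θ hθ (n + 1) (Nat.succ_pos n) this
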